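/- arXiv:2406.06317 — 4 statements merged into one kernel-verified Lean document; each statement's English description precedes it below -/
import Mathlib

section
/- Let T be a rooted tree, v a vertex of T, and i an integer with 0 ≤ i ≤ d_{T,v}+1, where d_{T,v} is the distance from the root to v. If x is a new vertex not in T, then eliminating x from the insertion tree T(i,x,v) recovers T; that is, p(T(i,x,v), x) = T. -/
open scoped Classical

universe u

variable {V : Type u}

/-- A rooted tree structure on a support set: data only, well-formedness is `RTree.WF`. -/
structure RTree (V : Type u) where
  supp : Set V
  root : V
  parent : V → Option V

namespace RTree

def parentRel (T : RTree V) (a b : V) : Prop := T.parent a = some b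

/-- `u` is an ancestor of `v` in `T` (reflexively). -/
def isAncestor (T : RTree V) (u v : V) : Prop :=
  Relation.ReflTransGen T.parentRel v u

def WF (T : RTree V) : Prop :=
  T.root ∈ T.supp ∧
  T.parent T.root = none ∧
  (∀ v, v ∉ T.supp → T.parent v = none) ∧
  (∀ v ∈ T.supp, v ≠ T.root → ∃ u ∈ T.supp, T.parent v = some u) ∧
  (∀ v ∈ T.supp, T.isAncestor T.root v)

/-- The vertex set of the subtree `T|c` rooted at `c`. -/
def descendants (T : RTree V) (c : V) : Set V :=
  {v | v ∈ T.supp ∧ T.isAncestor c v}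

/-- Iterated parent. -/
def pIter (T : RTree V) : ℕ → V → Option V
  | 0, w => some w
  | n + 1, w => (T.parent w).bind (T.pIter n)

/-- The depth `d_{T,v}` of `v` in `T` (distance to the root). -/
noncomputable def depthOf (T : RTree V) (v : V) : ℕ :=
  sInf {n | T.pIter n v = some T.root}

/-- The subtree of `T` rooted at `c`. -/
noncomputable def subtreeAt (T : RTree V) (c : V) : RTree V where
  supp := T.descendants c
  root := c
  parent := fun w => if w = c then none else if w ∈ T.descendants c then T.parent w else none

/-- The vertex at depth `i` on the path from the root to `v`. -/
noncomputable def ancAt (T : RTree V) (v : V) (i : ℕ) : V :=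
  (T.pIter (T.depthOf v - i) v).getD T.root

/-- Insertion `T(i,x,v)` of a new vertex `x` at depth `i` along the root-to-`v` path:
`i = 0` makes `x` the new root, `i = d_{T,v}+1` adds `x` as a new child of `v`, and
for `1 ≤ i ≤ d_{T,v}` the `i`-th edge of the root-to-`v` path is subdivided by `x`. -/
noncomputable def insertAt (T : RTree V) (i : ℕ) (x v : V) : RTree V :=
  if i = 0 then
    { supp := insert x T.supp
      root := x
      parent := fun w => if w = x then none else if w = T.root then some x else T.parent w }
  else if i = T.depthOf v + 1 then
    { supp := insert x T.supp
      root := T.root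
      parent := fun w => if w = x then some v else T.parent w }
  else
    { supp := insert x T.supp
      root := T.root
      parent := fun w =>
        if w = x then some (T.ancAt v (i - 1))
        else if w = T.ancAt v i then some x
        else T.parent w }

/-- Elimination `p(T,x)` of a vertex `x` (meaningful when `x` has at most one child). -/
noncomputable def elim (T : RTree V) (x : V) : RTree V where
  supp := T.supp \ {x}
  root :=
    if T.root = x then (if h : ∃ w, T.parent w = some x then h.choose else T.root) else T.root
  parent := fun w =>
    if w = x then none
    else if T.parent w = some x then T.parent x
    else T.parent w

end RTree

/-- Reachability inside the vertex set `s`, i.e. in the induced subgraph `G[s]`. -/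
def reachWithin (G : SimpleGraph V) (s : Set V) : V → V → Prop :=
  Relation.ReflTransGen (fun a b => a ∈ s ∧ b ∈ s ∧ G.Adj a b)

/-- Recursive definition of a search tree: the children of the root are the roots of
search trees on the connected components of the graph minus the root. -/
inductive IsSearchTreeRec {V : Type u} (G : SimpleGraph V) : RTree V → Prop
  | intro (T : RTree V) (hwf : T.WF)
      (hconn : ∀ a ∈ T.supp, ∀ b ∈ T.supp, reachWithin G T.supp a b)
      (hcomp : ∀ c, T.parent c = some T.root →
        ∀ w, w ∈ T.descendants c ↔
          (w ∈ T.supp ∧ w ≠ T.root ∧ reachWithin G (T.supp \ {T.root}) c w))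
      (hrec : ∀ c, T.parent c = some T.root → IsSearchTreeRec G (T.subtreeAt c)) :
      IsSearchTreeRec G T

/-- `T` is a search tree on the induced subgraph `G[s]`. -/
def IsSearchTreeOn (G : SimpleGraph V) (s : Set V) (T : RTree V) : Prop :=
  T.supp = s ∧ IsSearchTreeRec G T

/-- `T` is a search tree on `G`. -/
def IsSearchTree (G : SimpleGraph V) (T : RTree V) : Prop :=
  IsSearchTreeOn G Set.univ T

/-- The `uv`-rotation of `T` (for `v` a child of `u`): `u` becomes a child of `v`, `v` takes
`u`'s old parent, and each subtree `S` of `v` is reattached below `u` iff `u` has a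
`G`-neighbour in `S`. -/
noncomputable def rotate (G : SimpleGraph V) (T : RTree V) (u v : V) : RTree V where
  supp := T.supp
  root := if T.root = u then v else T.root
  parent := fun w =>
    if w = v then T.parent u
    else if w = u then some v
    else if T.parent w = some v then
      (if ∃ z ∈ T.descendants w, G.Adj u z then some u else some v)
    else T.parent w

def IsRotation (G : SimpleGraph V) (S S' : RTree V) : Prop :=
  ∃ u v, S.parent v = some u ∧ S' = rotate G S u v

def rotAdj (G : SimpleGraph V) (S S' : RTree V) : Prop :=
  S ≠ S' ∧ (IsRotation G S S' ∨ IsRotation G S' S)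

/-- The rotation graph of the induced subgraph `G[s]`: vertices are the search trees on
`G[s]`, two trees being adjacent iff they differ by a single rotation. -/
def rotationGraphOn (G : SimpleGraph V) (s : Set V) :
    SimpleGraph {T : RTree V // IsSearchTreeOn G s T} where
  Adj T T' := rotAdj G T.1 T'.1
  symm := ⟨fun T T' h => ⟨Ne.symm h.1, Or.symm h.2⟩⟩
  loopless := ⟨fun T h => h.1 rfl⟩

/-- A vertex of `K` of maximal depth in `T` (the vertex `v_{λ(T)}`). -/
noncomputable def deepestIn (T : RTree V) (K : Set V) : V :=
  if h : ∃ u, u ∈ K ∧ ∀ w ∈ K, T.depthOf w ≤ T.depthOf u then h.choose else T.root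

/-- `u` and `v` have different relative order in `T` and `T'`. -/
def diffRelOrder (T T' : RTree V) (u v : V) : Prop :=
  (T.isAncestor u v ∧ ¬ T'.isAncestor u v) ∨ (¬ T.isAncestor u v ∧ T'.isAncestor u v)

/-- The step from `S` to `S'` is a rotation of the pair `u`, `v`. -/
def isUVStep (G : SimpleGraph V) (u v : V) (S S' : RTree V) : Prop :=
  (S.parent v = some u ∧ S' = rotate G S u v) ∨ (S.parent u = some v ∧ S' = rotate G S v u)

/-- A threshold graph: obtainable from the one-vertex graph by repeatedly adding either an
isolated vertex or a universal vertex. -/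
def IsThresholdGraph {V : Type u} [Fintype V] (G : SimpleGraph V) : Prop :=
  ∃ e : Fin (Fintype.card V) ≃ V,
    ∀ i : Fin (Fintype.card V),
      (∀ j, j < i → ¬ G.Adj (e i) (e j)) ∨ (∀ j, j < i → G.Adj (e i) (e j))

/-- The complete split graph `SPK_{p,q}`: a clique of size `p` completely joined to an
independent set of size `q`. -/
def completeSplitGraph (p q : ℕ) : SimpleGraph (Fin p ⊕ Fin q) where
  Adj a b := a ≠ b ∧ (a.isLeft = true ∨ b.isLeft = true)
  symm := ⟨fun a b h => ⟨Ne.symm h.1, Or.symm h.2⟩⟩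
  loopless := ⟨fun a h => h.1 rfl⟩

namespace RTree

lemma ext' {A B : RTree V} (h1 : A.supp = B.supp) (h2 : A.root = B.root)
    (h3 : A.parent = B.parent) : A = B := by
  cases A; cases B; simp_all

lemma pIter_add (T : RTree V) (m n : ℕ) (w : V) :
    T.pIter (m + n) w = (T.pIter m w).bind (T.pIter n) := by
  induction m generalizing w with
  | zero => simp [pIter]
  | succ m ih =>
    rw [Nat.succ_add]
    show (T.parent w).bind (T.pIter (m + n)) = _
    show _ = ((T.parent w).bind (T.pIter m)).bind (T.pIter n)
    cases T.parent w with
    | none => rfl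
    | some u => exact ih u

lemma exists_pIter (T : RTree V) {a b : V} (h : Relation.ReflTransGen T.parentRel a b) :
    ∃ n, T.pIter n a = some b := by
  induction h with
  | refl => exact ⟨0, rfl⟩
  | tail h1 h2 ih =>
    obtain ⟨n, hn⟩ := ih
    refine ⟨n + 1, ?_⟩
    rw [T.pIter_add n 1, hn]
    show T.pIter 1 _ = _
    show (T.parent _).bind _ = _
    rw [h2]; rfl

lemma pIter_mem_supp (T : RTree V) (hT : T.WF) {w a : V} (hw : w ∈ T.supp) {n : ℕ}
    (h : T.pIter n w = some a) : a ∈ T.supp := by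
  induction n generalizing w with
  | zero => cases h; exact hw
  | succ n ih =>
    have h' : (T.parent w).bind (T.pIter n) = some a := h
    cases hpw : T.parent w with
    | none => rw [hpw] at h'; cases h'
    | some u =>
      rw [hpw] at h'
      have hu : u ∈ T.supp := by
        by_cases hr : w = T.root
        · rw [hr, hT.2.1] at hpw; cases hpw
        · obtain ⟨u', hu', he⟩ := hT.2.2.2.1 w hw hr
          rw [hpw] at he; cases he; exact hu'
      exact ih hu h'

lemma no_parent_eq (T : RTree V) (hT : T.WF) {x : V} (hx : x ∉ T.supp) (w : V) :
    T.parent w ≠ some x := by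
  intro h
  by_cases hw : w ∈ T.supp
  · by_cases hr : w = T.root
    · rw [hr, hT.2.1] at h; cases h
    · obtain ⟨u, hu, he⟩ := hT.2.2.2.1 w hw hr
      rw [he] at h; cases h; exact hx hu
  · rw [hT.2.2.1 w hw] at h; cases h

end RTree

/-- eliminating `x` from the insertion tree `T(i,x,v)` recovers `T`. -/
theorem elim_insertAt {V : Type u} (T : RTree V) (hT : T.WF) (v : V) (hv : v ∈ T.supp)
    (x : V) (hx : x ∉ T.supp) (i : ℕ) (hi : i ≤ T.depthOf v + 1) :
    (T.insertAt i x v).elim x = T := by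
  have hxr : x ≠ T.root := fun h => hx (h ▸ hT.1)
  have hnp := T.no_parent_eq hT hx
  have hpx : T.parent x = none := hT.2.2.1 x hx
  have hsupp : insert x T.supp \ {x} = T.supp := by
    ext w; simp only [Set.mem_diff, Set.mem_insert_iff, Set.mem_singleton_iff]
    constructor
    · rintro ⟨h1 | h1, h2⟩
      · exact absurd h1 h2
      · exact h1
    · intro h; exact ⟨Or.inr h, fun he => hx (he ▸ h)⟩
  -- depth facts
  have hdmem : T.pIter (T.depthOf v) v = some T.root := by
    have hne : {n | T.pIter n v = some T.root}.Nonempty :=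
      T.exists_pIter (hT.2.2.2.2 v hv)
    exact Nat.sInf_mem hne
  by_cases h0 : i = 0
  · subst h0
    set T' := T.insertAt 0 x v with hT'
    have hT'def : T' = { supp := insert x T.supp, root := x, parent := fun w => if w = x then none else if w = T.root then some x else T.parent w } := by
      simp [hT', RTree.insertAt]
    rw [hT'def]
    apply RTree.ext'
    · exact hsupp
    · -- root
      have hex : ∃ w, (if w = x then none else if w = T.root then some x else T.parent w)
          = some x := ⟨T.root, by rw [if_neg (Ne.symm hxr), if_pos rfl]⟩
      have hch : ∀ (h : ∃ w, (if w = x then none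
          else if w = T.root then some x else T.parent w) = some x), h.choose = T.root := by
        intro h
        have hspec := h.choose_spec
        by_cases hc : h.choose = x
        · rw [if_pos hc] at hspec; cases hspec
        · rw [if_neg hc] at hspec
          by_cases hc2 : h.choose = T.root
          · exact hc2
          · rw [if_neg hc2] at hspec; exact absurd hspec (hnp _)
      simp only [RTree.elim]
      simp only [if_true, eq_self_iff_true, ite_true]
      rw [dif_pos hex]
      exact hch hex
    · funext w
      by_cases hwx : w = x
      · subst hwx; simp [RTree.elim, hpx]
      · by_cases hwr : w = T.root
        · subst hwr; simp [RTree.elim, hwx, Ne.symm hxr, hT.2.1]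
        · simp [RTree.elim, hwx, hwr, hnp w]
  · by_cases h1 : i = T.depthOf v + 1
    · have hT'def : T.insertAt i x v = { supp := insert x T.supp, root := T.root, parent := fun w => if w = x then some v else T.parent w } := by
        simp [RTree.insertAt, h0, h1]
      rw [hT'def]
      apply RTree.ext'
      · exact hsupp
      · simp only [RTree.elim]
        rw [if_neg hxr.symm]
      · funext w
        by_cases hwx : w = x
        · subst hwx; simp [RTree.elim, hpx]
        · simp [RTree.elim, hwx, hnp w]
    · -- middle case: 1 ≤ i ≤ depth
      have hid : i ≤ T.depthOf v := by omega
      -- get ancestor facts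
      set d := T.depthOf v with hd
      have hsplit : T.pIter (d - i + i) v = some T.root := by
        rw [Nat.sub_add_cancel hid]; exact hdmem
      rw [T.pIter_add (d - i) i v] at hsplit
      obtain ⟨a, ha, hai⟩ : ∃ a, T.pIter (d - i) v = some a ∧ T.pIter i a = some T.root := by
        cases hq : T.pIter (d - i) v with
        | none => rw [hq] at hsplit; cases hsplit
        | some a => rw [hq] at hsplit; exact ⟨a, rfl, hsplit⟩
      have has : a ∈ T.supp := T.pIter_mem_supp hT hv ha
      have hax : a ≠ x := fun h => hx (h ▸ has)
      have hone : T.pIter (1 + (i - 1)) a = some T.root := by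
        rw [Nat.add_comm, Nat.sub_add_cancel (by omega : 1 ≤ i)]; exact hai
      rw [T.pIter_add 1 (i - 1) a] at hone
      have hp1 : T.pIter 1 a = T.parent a := by
        show (T.parent a).bind (T.pIter 0) = T.parent a
        cases T.parent a <;> rfl
      rw [hp1] at hone
      obtain ⟨b, hb, hbr⟩ : ∃ b, T.parent a = some b ∧ T.pIter (i - 1) b = some T.root := by
        cases hq : T.parent a with
        | none => rw [hq] at hone; cases hone
        | some b => rw [hq] at hone; exact ⟨b, rfl, hone⟩
      have hancA : T.ancAt v i = a := by
        simp only [RTree.ancAt, ← hd, ha]; rfl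
      have hancB : T.ancAt v (i - 1) = b := by
        have : d - (i - 1) = (d - i) + 1 := by omega
        simp only [RTree.ancAt, ← hd, this]
        rw [T.pIter_add (d - i) 1 v, ha]
        show (T.pIter 1 a).getD T.root = b
        rw [hp1, hb]; rfl
      have hT'def : T.insertAt i x v = { supp := insert x T.supp, root := T.root, parent := fun w => if w = x then some (T.ancAt v (i - 1)) else if w = T.ancAt v i then some x else T.parent w } := by
        simp [RTree.insertAt, h0, show ¬ i = T.depthOf v + 1 from h1]
      rw [hT'def]
      apply RTree.ext'
      · exact hsupp
      · simp only [RTree.elim]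
        rw [if_neg hxr.symm]
      · funext w
        by_cases hwx : w = x
        · subst hwx; simp [RTree.elim, hpx]
        · by_cases hwa : w = T.ancAt v i
          · rw [hancA] at hwa; subst hwa
            simp [RTree.elim, hax, hancA, hancB, hb, Ne.symm hxr]
          · simp [RTree.elim, hwx, hwa, hnp w]
end

section
/- Let G be a connected graph and T a rooted tree with vertex set V(G). Then T is a search tree on G if and only if for every non-root vertex v of T, the vertex set of the subtree T|v rooted at v induces a connected component of the graph obtained from G by deleting all vertices whose depth in T is strictly less than the depth of v. -/
open scoped Classical

universe u

variable {V : Type u}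

namespace STaux

open RTree

variable {V : Type u} {T : RTree V} {G : SimpleGraph V}

lemma parent_mem (hwf : T.WF) {v u : V} (h : T.parent v = some u) :
    v ∈ T.supp ∧ u ∈ T.supp ∧ v ≠ T.root := by
  have hv : v ∈ T.supp := by
    by_contra hv
    rw [hwf.2.2.1 v hv] at h; cases h
  have hvr : v ≠ T.root := by
    rintro rfl; rw [hwf.2.1] at h; cases h
  obtain ⟨u', hu', hpu'⟩ := hwf.2.2.2.1 v hv hvr
  rw [hpu'] at h
  exact ⟨hv, by injection h with h; exact h ▸ hu', hvr⟩

lemma exists_pIter_of_ancestor {u v : V} (h : T.isAncestor u v) :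
    ∃ n, T.pIter n v = some u := by
  induction h using Relation.ReflTransGen.head_induction_on with
  | refl => exact ⟨0, rfl⟩
  | @head a b h' _ ih =>
    obtain ⟨n, hn⟩ := ih
    have hp : T.parent a = some b := h'
    exact ⟨n + 1, by simp [RTree.pIter, hp, hn]⟩

lemma pIter_depthOf (hwf : T.WF) {v : V} (hv : v ∈ T.supp) :
    T.pIter (T.depthOf v) v = some T.root := by
  have : {n | T.pIter n v = some T.root}.Nonempty :=
    exists_pIter_of_ancestor (hwf.2.2.2.2 v hv)
  exact Nat.sInf_mem this

lemma depthOf_root : T.depthOf T.root = 0 :=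
  Nat.le_antisymm (Nat.sInf_le rfl) (Nat.zero_le _)

lemma depthOf_parent (hwf : T.WF) {v u : V} (h : T.parent v = some u) :
    T.depthOf v = T.depthOf u + 1 := by
  obtain ⟨hv, hu, hvr⟩ := parent_mem hwf h
  have hmem : ∀ n, T.pIter n v = some T.root ↔ ∃ m, T.pIter m u = some T.root ∧ n = m + 1 := by
    intro n
    cases n with
    | zero =>
      simp only [RTree.pIter]
      constructor
      · intro hh; exact absurd (Option.some.inj hh) hvr
      · rintro ⟨m, _, hm⟩; exact absurd hm (by omega)
    | succ m =>
      simp only [RTree.pIter, h, Option.bind_some]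
      constructor
      · intro hh; exact ⟨m, hh, rfl⟩
      · rintro ⟨m', hm', he⟩
        obtain rfl : m = m' := by omega
        exact hm'
  have h1 : T.depthOf u + 1 ∈ {n | T.pIter n v = some T.root} :=
    (hmem _).2 ⟨T.depthOf u, pIter_depthOf hwf hu, rfl⟩
  have h2 := Nat.sInf_mem ⟨_, h1⟩
  obtain ⟨m, hm, he⟩ := (hmem _).1 h2
  have := Nat.sInf_le (s := {n | T.pIter n u = some T.root}) hm
  have := Nat.sInf_le (s := {n | T.pIter n v = some T.root}) h1
  have hdu : T.depthOf u = sInf {n | T.pIter n u = some T.root} := rfl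
  have hdv : T.depthOf v = sInf {n | T.pIter n v = some T.root} := rfl
  omega

lemma depthOf_eq_zero_iff (hwf : T.WF) {v : V} (hv : v ∈ T.supp) :
    T.depthOf v = 0 ↔ v = T.root := by
  constructor
  · intro h
    have := pIter_depthOf hwf hv
    rw [h] at this
    injection this
  · rintro rfl; exact depthOf_root

lemma depthOf_not_mem (hwf : T.WF) {v : V} (hv : v ∉ T.supp) : T.depthOf v = 0 := by
  have : {n | T.pIter n v = some T.root} = ∅ := by
    ext n
    simp only [Set.mem_setOf_eq, Set.mem_empty_iff_false, iff_false]
    cases n with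
    | zero =>
      intro hh
      exact hv (by injection hh with hh; exact hh ▸ hwf.1)
    | succ m =>
      simp [RTree.pIter, hwf.2.2.1 v hv]
  unfold RTree.depthOf
  rw [this, Nat.sInf_empty]

lemma depthOf_lt_of_ancestor (hwf : T.WF) {u v : V} (h : T.isAncestor u v)
    (hne : v ≠ u) : T.depthOf u < T.depthOf v := by
  unfold RTree.isAncestor at h
  induction h using Relation.ReflTransGen.head_induction_on with
  | refl => exact absurd rfl hne
  | @head a b h' hb ih =>
    have hd : T.depthOf a = T.depthOf b + 1 := depthOf_parent hwf h'
    by_cases hbu : b = u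
    · subst hbu; omega
    · have := ih hbu; omega

lemma isAncestor_antisymm (hwf : T.WF) {u v : V} (h1 : T.isAncestor u v)
    (h2 : T.isAncestor v u) : u = v := by
  by_contra hne
  have l1 := depthOf_lt_of_ancestor hwf h1 (Ne.symm hne)
  have l2 := depthOf_lt_of_ancestor hwf h2 hne
  omega

lemma eq_root_of_ancestor_root (hwf : T.WF) {c : V} (h : T.isAncestor c T.root) :
    c = T.root := by
  rcases Relation.ReflTransGen.cases_head h with he | ⟨b, hb, _⟩
  · exact he.symm
  · rw [RTree.parentRel, hwf.2.1] at hb; cases hb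

lemma isAncestor_trans {u v w : V} (h1 : T.isAncestor u v) (h2 : T.isAncestor v w) :
    T.isAncestor u w := Relation.ReflTransGen.trans h2 h1

lemma exists_child (hwf : T.WF) {v : V} (hv : v ∈ T.supp) (hne : v ≠ T.root) :
    ∃ c, T.parent c = some T.root ∧ v ∈ T.descendants c := by
  have h := hwf.2.2.2.2 v hv
  unfold RTree.isAncestor at h
  have key : ∀ a, Relation.ReflTransGen T.parentRel a T.root → a ∈ T.supp →
      a = T.root ∨ ∃ c, T.parent c = some T.root ∧ a ∈ T.descendants c := by
    intro a ha
    induction ha using Relation.ReflTransGen.head_induction_on with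
    | refl => exact fun _ => Or.inl rfl
    | @head a b h' hb ih =>
      intro has
      have hbs : b ∈ T.supp := (parent_mem hwf h').2.1
      rcases ih hbs with rfl | ⟨c, hc, hcb⟩
      · exact Or.inr ⟨a, h', has, Relation.ReflTransGen.refl⟩
      · exact Or.inr ⟨c, hc, has, Relation.ReflTransGen.head h' hcb.2⟩
  rcases key v h hv with rfl | hc
  · exact absurd rfl hne
  · exact hc

lemma descendants_parent_mem (hwf : T.WF) {c w : V} (hw : w ∈ T.descendants c)
    (hne : w ≠ c) : ∃ u, T.parent w = some u ∧ u ∈ T.descendants c := by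
  rcases Relation.ReflTransGen.cases_head hw.2 with he | ⟨u, hu, h'⟩
  · exact absurd he hne
  · exact ⟨u, hu, (parent_mem hwf hu).2.1, h'⟩

lemma root_not_mem_descendants (hwf : T.WF) {c : V} (hc : c ≠ T.root) :
    T.root ∉ T.descendants c := fun h => hc (eq_root_of_ancestor_root hwf h.2)

section Subtree

variable {c : V}

lemma subtreeAt_supp : (T.subtreeAt c).supp = T.descendants c := rfl

lemma subtreeAt_parent_eq_some {w u : V} (h : (T.subtreeAt c).parent w = some u) :
    T.parent w = some u ∧ w ∈ T.descendants c ∧ w ≠ c := by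
  unfold RTree.subtreeAt at h
  simp only at h
  split at h
  · cases h
  · split at h
    · exact ⟨h, by assumption, by assumption⟩
    · cases h

lemma isAncestor_subtreeAt (hwf : T.WF) {v w : V} (hv : v ∈ T.descendants c)
    (hw : w ∈ T.supp) (h : T.isAncestor v w) : (T.subtreeAt c).isAncestor v w := by
  unfold RTree.isAncestor at h ⊢
  revert hw
  induction h using Relation.ReflTransGen.head_induction_on with
  | refl => exact fun _ => Relation.ReflTransGen.refl
  | @head a b h' hb ih =>
    intro ha
    have hp : T.parent a = some b := h'
    have hbs : b ∈ T.supp := (parent_mem hwf hp).2.1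
    by_cases hac : a = c
    · subst hac
      obtain rfl : a = v := isAncestor_antisymm hwf hv.2 (Relation.ReflTransGen.head h' hb)
      exact Relation.ReflTransGen.refl
    · have haD : a ∈ T.descendants c :=
        ⟨ha, isAncestor_trans hv.2 (Relation.ReflTransGen.head h' hb)⟩
      have hp' : (T.subtreeAt c).parentRel a b := by
        show (if a = c then none else if a ∈ T.descendants c then T.parent a else none) = some b
        rw [if_neg hac, if_pos haD, hp]
      exact Relation.ReflTransGen.head hp' (ih hbs)

lemma isAncestor_of_subtreeAt {v w : V} (h : (T.subtreeAt c).isAncestor v w) :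
    T.isAncestor v w :=
  Relation.ReflTransGen.mono (fun _ _ hab => (subtreeAt_parent_eq_some hab).1) _ _ h

lemma subtreeAt_wf (hwf : T.WF) (hc : c ∈ T.supp) : (T.subtreeAt c).WF := by
  refine ⟨⟨hc, Relation.ReflTransGen.refl⟩, ?_, ?_, ?_, ?_⟩
  · show (if c = c then none else _) = none
    rw [if_pos rfl]
  · intro v hv
    have hv' : v ∉ T.descendants c := hv
    have hvc : v ≠ c := by
      intro h; subst h; exact hv' ⟨hc, Relation.ReflTransGen.refl⟩
    show (if v = c then none else if v ∈ T.descendants c then T.parent v else none) = none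
    rw [if_neg hvc, if_neg hv']
  · intro v hv hvne
    have hv' : v ∈ T.descendants c := hv
    have hvne' : v ≠ c := hvne
    obtain ⟨u, hu, huD⟩ := descendants_parent_mem hwf hv' hvne'
    refine ⟨u, huD, ?_⟩
    show (if v = c then none else if v ∈ T.descendants c then T.parent v else none) = some u
    rw [if_neg hvne', if_pos hv', hu]
  · intro v hv
    have hv' : v ∈ T.descendants c := hv
    exact isAncestor_subtreeAt hwf ⟨hc, Relation.ReflTransGen.refl⟩ hv'.1 hv'.2

lemma descendants_subtreeAt (hwf : T.WF) {v : V} (hv : v ∈ T.descendants c) :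
    (T.subtreeAt c).descendants v = T.descendants v := by
  ext w
  constructor
  · rintro ⟨hw, ha⟩
    exact ⟨hw.1, isAncestor_of_subtreeAt ha⟩
  · rintro ⟨hw, ha⟩
    exact ⟨⟨hw, isAncestor_trans hv.2 ha⟩, isAncestor_subtreeAt hwf hv hw ha⟩

lemma depthOf_subtreeAt (hwf : T.WF) (hc : c ∈ T.supp) {w : V}
    (hw : w ∈ T.descendants c) :
    (T.subtreeAt c).depthOf w + T.depthOf c = T.depthOf w := by
  have hwf' : (T.subtreeAt c).WF := subtreeAt_wf hwf hc
  obtain ⟨hws, hanc⟩ := hw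
  unfold RTree.isAncestor at hanc
  revert hws
  induction hanc using Relation.ReflTransGen.head_induction_on with
  | refl =>
    intro _
    have : (T.subtreeAt c).depthOf c = 0 := depthOf_root (T := T.subtreeAt c)
    rw [this, Nat.zero_add]
  | @head a b h' hb ih =>
    intro ha
    have hp : T.parent a = some b := h'
    have hbs : b ∈ T.supp := (parent_mem hwf hp).2.1
    by_cases hac : a = c
    · subst hac
      have : (T.subtreeAt a).depthOf a = 0 := depthOf_root (T := T.subtreeAt a)
      rw [this, Nat.zero_add]
    · have haD : a ∈ T.descendants c := ⟨ha, Relation.ReflTransGen.head h' hb⟩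
      have hp' : (T.subtreeAt c).parent a = some b := by
        show (if a = c then none else if a ∈ T.descendants c then T.parent a else none) = some b
        rw [if_neg hac, if_pos haD, hp]
      have e1 : T.depthOf a = T.depthOf b + 1 := depthOf_parent hwf hp
      have e2 : (T.subtreeAt c).depthOf a = (T.subtreeAt c).depthOf b + 1 :=
        depthOf_parent hwf' hp'
      have := ih hbs
      omega

end Subtree

section Reach

variable {s t : Set V} {a b v w : V}

lemma reachWithin_mono (hst : s ⊆ t) (h : reachWithin G s v w) : reachWithin G t v w :=
  Relation.ReflTransGen.mono (fun _ _ hab => ⟨hst hab.1, hst hab.2.1, hab.2.2⟩) _ _ h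

lemma reachWithin_symm (h : reachWithin G s v w) : reachWithin G s w v := by
  induction h with
  | refl => exact Relation.ReflTransGen.refl
  | tail _ hstep ih =>
    exact Relation.ReflTransGen.head ⟨hstep.2.1, hstep.1, hstep.2.2.symm⟩ ih

lemma reachWithin_trans (h1 : reachWithin G s a b) (h2 : reachWithin G s b w) :
    reachWithin G s a w := Relation.ReflTransGen.trans h1 h2

lemma reachWithin_restrict (hcl : ∀ x y, x ∈ t → y ∈ s → G.Adj x y → y ∈ t)
    (hv : v ∈ t) (h : reachWithin G s v w) :
    w ∈ t ∧ reachWithin G {z | z ∈ s ∧ z ∈ t} v w := by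
  induction h with
  | refl => exact ⟨hv, Relation.ReflTransGen.refl⟩
  | @tail b w' _ hstep ih =>
    obtain ⟨hbt, hr⟩ := ih
    have hwt : w' ∈ t := hcl b w' hbt hstep.2.1 hstep.2.2
    exact ⟨hwt, hr.tail ⟨⟨hstep.1, hbt⟩, ⟨hstep.2.1, hwt⟩, hstep.2.2⟩⟩

end Reach

section Bridge

variable {c : V}

/-- The depth-based set at a child of the root equals `supp \ {root}`. -/
lemma childSet_eq (hwf : T.WF) (hpc : T.parent c = some T.root) :
    {z | z ∈ T.supp ∧ T.depthOf c ≤ T.depthOf z} = T.supp \ {T.root} := by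
  have hdc : T.depthOf c = 1 := by
    rw [depthOf_parent hwf hpc, depthOf_root]
  ext z
  simp only [Set.mem_setOf_eq, Set.mem_diff, Set.mem_singleton_iff, hdc]
  constructor
  · rintro ⟨hz, hd⟩
    refine ⟨hz, fun h => ?_⟩
    subst h
    rw [depthOf_root] at hd
    omega
  · rintro ⟨hz, hne⟩
    refine ⟨hz, ?_⟩
    have := (depthOf_eq_zero_iff hwf hz).not.2 hne
    omega

lemma bridge0 (hwf : T.WF) (hpc : T.parent c = some T.root) (w : V) :
    (w ∈ T.supp ∧ T.depthOf c ≤ T.depthOf w ∧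
        reachWithin G {z | z ∈ T.supp ∧ T.depthOf c ≤ T.depthOf z} c w) ↔
      (w ∈ T.supp ∧ w ≠ T.root ∧ reachWithin G (T.supp \ {T.root}) c w) := by
  have hdc : T.depthOf c = 1 := by
    rw [depthOf_parent hwf hpc, depthOf_root]
  rw [childSet_eq hwf hpc]
  constructor
  · rintro ⟨hw, hd, hr⟩
    refine ⟨hw, fun h => ?_, hr⟩
    subst h; rw [depthOf_root] at hd; omega
  · rintro ⟨hw, hne, hr⟩
    refine ⟨hw, ?_, hr⟩
    have := (depthOf_eq_zero_iff hwf hw).not.2 hne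
    omega

/-- Closure of the subtree below a child of the root, from the component property. -/
lemma closure_of_hcomp (hwf : T.WF) (hpc : T.parent c = some T.root)
    (hcomp : ∀ w, w ∈ T.descendants c ↔
      (w ∈ T.supp ∧ w ≠ T.root ∧ reachWithin G (T.supp \ {T.root}) c w)) :
    ∀ a b, a ∈ T.descendants c → b ∈ T.supp → b ≠ T.root → G.Adj a b →
      b ∈ T.descendants c := by
  intro a b haD hb hbne hadj
  have hcr : c ≠ T.root := (parent_mem hwf hpc).2.2
  have haS : a ∈ T.supp \ {T.root} :=
    ⟨haD.1, fun h => root_not_mem_descendants hwf hcr (h ▸ haD)⟩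
  have hra := ((hcomp a).1 haD).2.2
  exact (hcomp b).2 ⟨hb, hbne, hra.tail ⟨haS, ⟨hb, hbne⟩, hadj⟩⟩

lemma bridge2 (hwf : T.WF) (hpc : T.parent c = some T.root)
    (hcl : ∀ a b, a ∈ T.descendants c → b ∈ T.supp → b ≠ T.root → G.Adj a b →
      b ∈ T.descendants c)
    {v : V} (hv : v ∈ T.descendants c) (w : V) :
    (w ∈ T.descendants c ∧
        (T.subtreeAt c).depthOf v ≤ (T.subtreeAt c).depthOf w ∧
        reachWithin G
          {z | z ∈ T.descendants c ∧ (T.subtreeAt c).depthOf v ≤ (T.subtreeAt c).depthOf z}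
          v w) ↔
      (w ∈ T.supp ∧ T.depthOf v ≤ T.depthOf w ∧
        reachWithin G {z | z ∈ T.supp ∧ T.depthOf v ≤ T.depthOf z} v w) := by
  have hcs : c ∈ T.supp := (parent_mem hwf hpc).1
  have hcr : c ≠ T.root := (parent_mem hwf hpc).2.2
  have hdc : T.depthOf c = 1 := by
    rw [depthOf_parent hwf hpc, depthOf_root]
  have hdepth : ∀ z, z ∈ T.descendants c →
      ((T.subtreeAt c).depthOf v ≤ (T.subtreeAt c).depthOf z ↔
        T.depthOf v ≤ T.depthOf z) := by
    intro z hz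
    have h1 := depthOf_subtreeAt hwf hcs hv
    have h2 := depthOf_subtreeAt hwf hcs hz
    omega
  have hdv1 : 1 ≤ T.depthOf v := by
    have h1 := depthOf_subtreeAt hwf hcs hv
    omega
  -- the closure hypothesis specialised to the depth set
  have hcl' : ∀ x y, x ∈ T.descendants c →
      y ∈ {z | z ∈ T.supp ∧ T.depthOf v ≤ T.depthOf z} → G.Adj x y →
      y ∈ T.descendants c := by
    intro x y hx hy hadj
    refine hcl x y hx hy.1 (fun h => ?_) hadj
    subst h
    have := hy.2
    rw [depthOf_root] at this
    omega
  constructor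
  · rintro ⟨hw, hd, hr⟩
    refine ⟨hw.1, (hdepth w hw).1 hd, reachWithin_mono ?_ hr⟩
    rintro z ⟨hz, hdz⟩
    exact ⟨hz.1, (hdepth z hz).1 hdz⟩
  · rintro ⟨hw, hd, hr⟩
    obtain ⟨hwD, hr'⟩ := reachWithin_restrict hcl' hv hr
    refine ⟨hwD, (hdepth w hwD).2 hd, reachWithin_mono ?_ hr'⟩
    rintro z ⟨hz1, hz2⟩
    exact ⟨hz2, (hdepth z hz2).2 hz1.2⟩

end Bridge

lemma reachWithin_univ_of_reachable {a b : V} (h : G.Reachable a b) :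
    reachWithin G Set.univ a b := by
  obtain ⟨p⟩ := h
  induction p with
  | nil => exact Relation.ReflTransGen.refl
  | cons h _ ih => exact Relation.ReflTransGen.head ⟨trivial, trivial, h⟩ ih

lemma stA {T : RTree V} (h : IsSearchTreeRec G T) :
    ∀ v, v ∈ T.supp → v ≠ T.root → ∀ w,
      (w ∈ T.descendants v ↔
        (w ∈ T.supp ∧ T.depthOf v ≤ T.depthOf w ∧
          reachWithin G {z | z ∈ T.supp ∧ T.depthOf v ≤ T.depthOf z} v w)) := by
  induction h with
  | intro T hwf hconn hcomp hrec ih =>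
    intro v hv hvne w
    obtain ⟨c, hpc, hvD⟩ := exists_child hwf hv hvne
    have hcl := closure_of_hcomp (G := G) hwf hpc (hcomp c hpc)
    by_cases hvc : v = c
    · subst hvc
      exact (hcomp v hpc w).trans (bridge0 hwf hpc w).symm
    · have hvD' : v ∈ (T.subtreeAt c).supp := hvD
      have hvne' : v ≠ (T.subtreeAt c).root := hvc
      have hsub := ih c hpc v hvD' hvne' w
      rw [descendants_subtreeAt hwf hvD] at hsub
      exact hsub.trans (bridge2 hwf hpc hcl hvD w)

lemma stB [Fintype V] : ∀ (n : ℕ) (T : RTree V), T.supp.ncard ≤ n → T.WF →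
    (∀ a ∈ T.supp, ∀ b ∈ T.supp, reachWithin G T.supp a b) →
    (∀ v, v ∈ T.supp → v ≠ T.root → ∀ w,
      (w ∈ T.descendants v ↔
        (w ∈ T.supp ∧ T.depthOf v ≤ T.depthOf w ∧
          reachWithin G {z | z ∈ T.supp ∧ T.depthOf v ≤ T.depthOf z} v w))) →
    IsSearchTreeRec G T := by
  intro n
  induction n with
  | zero =>
    intro T hn hwf _ _
    exfalso
    have : 0 < T.supp.ncard := (Set.ncard_pos (Set.toFinite _)).2 ⟨T.root, hwf.1⟩
    omega
  | succ n ih =>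
    intro T hn hwf hconn hprop
    have hcompAll : ∀ c, T.parent c = some T.root → ∀ w,
        w ∈ T.descendants c ↔
          (w ∈ T.supp ∧ w ≠ T.root ∧ reachWithin G (T.supp \ {T.root}) c w) := by
      intro c hpc w
      obtain ⟨hcs, _, hcr⟩ := parent_mem hwf hpc
      exact (hprop c hcs hcr w).trans (bridge0 hwf hpc w)
    refine IsSearchTreeRec.intro T hwf hconn hcompAll ?_
    intro c hpc
    obtain ⟨hcs, _, hcr⟩ := parent_mem hwf hpc
    have hcl := closure_of_hcomp (G := G) hwf hpc (hcompAll c hpc)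
    apply ih (T.subtreeAt c)
    · have hss : T.descendants c ⊂ T.supp := by
        refine (Set.ssubset_iff_of_subset (fun z hz => hz.1)).2
          ⟨T.root, hwf.1, root_not_mem_descendants hwf hcr⟩
      have := Set.ncard_lt_ncard hss (Set.toFinite _)
      have hle : (T.subtreeAt c).supp.ncard = (T.descendants c).ncard := rfl
      omega
    · exact subtreeAt_wf hwf hcs
    · have hreach : ∀ a ∈ T.descendants c, reachWithin G (T.descendants c) c a := by
        intro a ha
        have h := ((hcompAll c hpc a).1 ha).2.2
        have hcl2 : ∀ x y, x ∈ T.descendants c → y ∈ T.supp \ {T.root} → G.Adj x y →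
            y ∈ T.descendants c := fun x y hx hy hxy => hcl x y hx hy.1 hy.2 hxy
        obtain ⟨_, hr⟩ := reachWithin_restrict hcl2 ⟨hcs, Relation.ReflTransGen.refl⟩ h
        exact reachWithin_mono (fun z hz => hz.2) hr
      intro a ha b hb
      exact reachWithin_trans (reachWithin_symm (hreach a ha)) (hreach b hb)
    · intro v hv hvne w
      have hvD : v ∈ T.descendants c := hv
      have hvc : v ≠ c := hvne
      have hvs : v ∈ T.supp := hvD.1
      have hvr : v ≠ T.root := fun h => root_not_mem_descendants hwf hcr (h ▸ hvD)
      have h := (hprop v hvs hvr w).trans (bridge2 (G := G) hwf hpc hcl hvD w).symm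
      rw [descendants_subtreeAt hwf hvD]
      exact h

end STaux

/-- a rooted tree on `V(G)` is a search tree on `G` iff for every non-root
vertex `v` the subtree `T|v` induces a connected component of the graph obtained from `G`
by deleting all vertices of depth smaller than that of `v`. -/
theorem isSearchTree_iff_subtrees_components {V : Type u} [Fintype V] (G : SimpleGraph V)
    (hG : G.Connected) (T : RTree V) (hwf : T.WF) (hsupp : T.supp = Set.univ) :
    IsSearchTree G T ↔
      ∀ v : V, v ≠ T.root → ∀ w : V,
        w ∈ T.descendants v ↔
          (T.depthOf v ≤ T.depthOf w ∧
            reachWithin G {z | T.depthOf v ≤ T.depthOf z} v w) := by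
  have hconn : ∀ a ∈ T.supp, ∀ b ∈ T.supp, reachWithin G T.supp a b := by
    intro a _ b _
    rw [hsupp]
    exact STaux.reachWithin_univ_of_reachable (hG.preconnected a b)
  have hset : ∀ v : V, {z | z ∈ T.supp ∧ T.depthOf v ≤ T.depthOf z}
      = {z | T.depthOf v ≤ T.depthOf z} := by
    intro v; ext z; simp [hsupp]
  constructor
  · rintro ⟨-, hrec⟩ v hvne w
    have h := STaux.stA hrec v (by rw [hsupp]; trivial) hvne w
    rw [hset v] at h
    refine h.trans ?_
    rw [hsupp]
    simp
  · intro hp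
    refine ⟨hsupp, STaux.stB T.supp.ncard T le_rfl hwf hconn ?_⟩
    intro v hv hvne w
    rw [hset v]
    have h := hp v hvne w
    refine h.trans ?_
    rw [hsupp]
    simp
end

section
/- Let G be a connected graph. Two vertices u and v are adjacent in G if and only if for every search tree T on G, the vertices u and v lie on a common branch of T (equivalently, one is an ancestor of the other in T). -/
open scoped Classical

universe u

variable {V : Type u}

section Helpers


variable {V : Type u} (G : SimpleGraph V)

/-- The connected component of `w` inside the induced subgraph `G[s]`. -/
def compIn (s : Set V) (w : V) : Set V := {z | z ∈ s ∧ reachWithin G s w z}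

lemma reachWithin_symm {s : Set V} {a b : V} (h : reachWithin G s a b) :
    reachWithin G s b a := by
  refine @Std.Symm.symm _ _ (@Relation.ReflTransGen.stdSymm _ _ ⟨fun x y hxy => ?_⟩) _ _ h
  exact ⟨hxy.2.1, hxy.1, hxy.2.2.symm⟩

lemma mem_compIn_self {s : Set V} {w : V} (hw : w ∈ s) : w ∈ compIn G s w :=
  ⟨hw, Relation.ReflTransGen.refl⟩

lemma compIn_subset {s : Set V} {w : V} : compIn G s w ⊆ s := fun _ h => h.1

lemma compIn_eq_of_mem {s : Set V} {w z : V} (hz : z ∈ compIn G s w) :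
    compIn G s z = compIn G s w := by
  ext y
  constructor
  · rintro ⟨hy, hr⟩; exact ⟨hy, hz.2.trans hr⟩
  · rintro ⟨hy, hr⟩; exact ⟨hy, (reachWithin_symm G hz.2).trans hr⟩

/-- Reachability within `s` from a point of a component happens within the component. -/
lemma reachWithin_compIn {s : Set V} {a b : V} (ha : a ∈ s) (h : reachWithin G s a b) :
    reachWithin G (compIn G s a) a b := by
  induction h with
  | refl => exact Relation.ReflTransGen.refl
  | @tail c b hac hcb ih =>
    exact ih.tail ⟨⟨hcb.1, hac⟩, ⟨hcb.2.1, hac.tail hcb⟩, hcb.2.2⟩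

end Helpers


section Glue

variable {V : Type u} (G : SimpleGraph V)

lemma RTree.ext'_s3 : ∀ (A B : RTree V), A.supp = B.supp → A.root = B.root →
    A.parent = B.parent → A = B := by
  rintro ⟨⟩ ⟨⟩ rfl rfl rfl; rfl

lemma IsSearchTreeRec.wf {T : RTree V} (h : IsSearchTreeRec G T) : T.WF := by
  cases h with | intro T hwf _ _ _ => exact hwf

/-- Glue search trees on the components of `s \ {r}` below the root `r`. -/
noncomputable def glueTree (s : Set V) (r : V) (F : V → RTree V) : RTree V where
  supp := s
  root := r
  parent := fun w =>
    if w ∈ s ∧ w ≠ r then (if w = (F w).root then some r else (F w).parent w) else none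

variable {s : Set V} {r : V} {F : V → RTree V}

lemma glueTree_parent (w : V) : (glueTree s r F).parent w =
    if w ∈ s ∧ w ≠ r then (if w = (F w).root then some r else (F w).parent w) else none := rfl

variable
  (hF : ∀ w, w ∈ s → w ≠ r → IsSearchTreeOn G (compIn G (s \ {r}) w) (F w))
  (hFc : ∀ w, w ∈ s → w ≠ r → ∀ w', w' ∈ compIn G (s \ {r}) w → F w' = F w)

include hF hFc in
lemma glue_lift {w : V} (hw : w ∈ s) (hwr : w ≠ r) {a b : V}
    (h : Relation.ReflTransGen (F w).parentRel a b) :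
    Relation.ReflTransGen (glueTree s r F).parentRel a b := by
  have hwf : (F w).WF := (hF w hw hwr).2.wf G
  have hsupp : (F w).supp = compIn G (s \ {r}) w := (hF w hw hwr).1
  induction h with
  | refl => exact Relation.ReflTransGen.refl
  | @tail x y hax hxy ih =>
    refine ih.tail ?_
    have hxsupp : x ∈ (F w).supp := by
      by_contra hx
      rw [RTree.parentRel, hwf.2.2.1 x hx] at hxy; cases hxy
    have hxroot : x ≠ (F w).root := by
      intro he; rw [RTree.parentRel, he, hwf.2.1] at hxy; cases hxy
    have hxC : x ∈ compIn G (s \ {r}) w := hsupp ▸ hxsupp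
    have hxs : x ∈ s \ {r} := compIn_subset G hxC
    have hFx : F x = F w := hFc w hw hwr x hxC
    show (glueTree s r F).parent x = some y
    rw [glueTree_parent, if_pos (show x ∈ s ∧ x ≠ r from ⟨hxs.1, hxs.2⟩), hFx,
      if_neg hxroot]
    exact hxy

include hF hFc in
lemma glue_chain {w c : V} (hc : c ∈ s) (hcr : c ≠ r)
    (h : Relation.ReflTransGen (glueTree s r F).parentRel w c) :
    w ∈ compIn G (s \ {r}) c ∧ Relation.ReflTransGen (F c).parentRel w c := by
  induction h using Relation.ReflTransGen.head_induction_on with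
  | refl => exact ⟨mem_compIn_self G ⟨hc, hcr⟩, Relation.ReflTransGen.refl⟩
  | @head a a' hstep htail ih =>
    obtain ⟨ha'C, hchain⟩ := ih
    have hstep' : (glueTree s r F).parent a = some a' := hstep
    rw [glueTree_parent] at hstep'
    by_cases has : a ∈ s ∧ a ≠ r
    swap
    · rw [if_neg has] at hstep'; cases hstep'
    rw [if_pos has] at hstep'
    have haC : a ∈ compIn G (s \ {r}) a := mem_compIn_self G ⟨has.1, has.2⟩
    by_cases hroot : a = (F a).root
    · rw [if_pos hroot] at hstep'
      have hra : r = a' := Option.some.inj hstep'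
      exact absurd hra.symm (compIn_subset G ha'C).2
    · rw [if_neg hroot] at hstep'
      have hwfA : (F a).WF := (hF a has.1 has.2).2.wf G
      have hsuppA : (F a).supp = compIn G (s \ {r}) a := (hF a has.1 has.2).1
      obtain ⟨p, hp, hpeq⟩ := hwfA.2.2.2.1 a (by rw [hsuppA]; exact haC) hroot
      have hpa' : p = a' := Option.some.inj (hpeq.symm.trans hstep')
      have ha'A : a' ∈ compIn G (s \ {r}) a := by
        rw [← hpa']; rw [hsuppA] at hp; exact hp
      have hCeq : compIn G (s \ {r}) a = compIn G (s \ {r}) c :=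
        (compIn_eq_of_mem G ha'A).symm.trans (compIn_eq_of_mem G ha'C)
      have haCc : a ∈ compIn G (s \ {r}) c := hCeq ▸ haC
      have hFa : F a = F c := hFc c hc hcr a haCc
      refine ⟨haCc, Relation.ReflTransGen.head ?_ hchain⟩
      show (F c).parent a = some a'
      rw [← hFa]; exact hstep'

include hF hFc in
lemma glue_isSearchTreeOn (hr : r ∈ s)
    (hconnS : ∀ a ∈ s, ∀ b ∈ s, reachWithin G s a b) :
    IsSearchTreeOn G s (glueTree s r F) := by
  have hsuppF : ∀ w, w ∈ s → w ≠ r → (F w).supp = compIn G (s \ {r}) w :=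
    fun w hw hwr => (hF w hw hwr).1
  have hwfF : ∀ w, w ∈ s → w ≠ r → (F w).WF := fun w hw hwr => (hF w hw hwr).2.wf G
  have hanc : ∀ v ∈ s, (glueTree s r F).isAncestor r v := by
    intro v hv
    by_cases hvr : v = r
    · rw [hvr]; exact Relation.ReflTransGen.refl
    · have hwfv := hwfF v hv hvr
      have hvsupp : v ∈ (F v).supp := by
        rw [hsuppF v hv hvr]; exact mem_compIn_self G ⟨hv, hvr⟩
      have hchain : Relation.ReflTransGen (F v).parentRel v (F v).root :=
        hwfv.2.2.2.2 v hvsupp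
      refine (glue_lift G hF hFc hv hvr hchain).tail ?_
      have hρ : (F v).root ∈ compIn G (s \ {r}) v := by
        rw [← hsuppF v hv hvr]; exact hwfv.1
      have hρs := compIn_subset G hρ
      have hFρ : F (F v).root = F v := hFc v hv hvr _ hρ
      show (glueTree s r F).parent (F v).root = some r
      rw [glueTree_parent, if_pos (⟨hρs.1, hρs.2⟩ : (F v).root ∈ s ∧ (F v).root ≠ r), hFρ, if_pos rfl]
  have hwf : (glueTree s r F).WF := by
    refine ⟨hr, ?_, ?_, ?_, hanc⟩
    · rw [glueTree_parent, if_neg (fun h => h.2 rfl)]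
    · intro v hv; rw [glueTree_parent, if_neg (fun h => hv h.1)]
    · intro v hv hvr
      rw [glueTree_parent, if_pos (⟨hv, hvr⟩ : v ∈ s ∧ v ≠ r)]
      by_cases hroot : v = (F v).root
      · exact ⟨r, hr, by rw [if_pos hroot]⟩
      · obtain ⟨p, hp, hpeq⟩ := (hwfF v hv hvr).2.2.2.1 v
          (by rw [hsuppF v hv hvr]; exact mem_compIn_self G ⟨hv, hvr⟩) hroot
        have hps : p ∈ s \ {r} := by
          rw [hsuppF v hv hvr] at hp; exact compIn_subset G hp
        exact ⟨p, hps.1, by rw [if_neg hroot]; exact hpeq⟩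
  have hchild : ∀ c, (glueTree s r F).parent c = some (glueTree s r F).root →
      c ∈ s ∧ c ≠ r ∧ c = (F c).root := by
    intro c hc
    rw [glueTree_parent] at hc
    by_cases hcs : c ∈ s ∧ c ≠ r
    swap
    · rw [if_neg hcs] at hc; cases hc
    rw [if_pos hcs] at hc
    refine ⟨hcs.1, hcs.2, ?_⟩
    by_contra hroot
    rw [if_neg hroot] at hc
    obtain ⟨p, hp, hpeq⟩ := (hwfF c hcs.1 hcs.2).2.2.2.1 c
      (by rw [hsuppF c hcs.1 hcs.2]; exact mem_compIn_self G ⟨hcs.1, hcs.2⟩) hroot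
    have hpr : p = r := Option.some.inj (hpeq.symm.trans hc)
    rw [hsuppF c hcs.1 hcs.2] at hp
    exact (compIn_subset G hp).2 hpr
  have hdesc : ∀ c, (glueTree s r F).parent c = some (glueTree s r F).root → ∀ w,
      (w ∈ (glueTree s r F).descendants c ↔ w ∈ compIn G (s \ {r}) c) := by
    intro c hc w
    obtain ⟨hcs, hcr, hcroot⟩ := hchild c hc
    constructor
    · rintro ⟨hws, hanc'⟩
      exact (glue_chain G hF hFc hcs hcr hanc').1
    · intro hwC
      refine ⟨(compIn_subset G hwC).1, ?_⟩
      have hwsupp : w ∈ (F c).supp := by rw [hsuppF c hcs hcr]; exact hwC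
      have h2 := (hwfF c hcs hcr).2.2.2.2 w hwsupp
      rw [← hcroot] at h2
      exact glue_lift G hF hFc hcs hcr h2
  refine ⟨rfl, ?_⟩
  refine IsSearchTreeRec.intro _ hwf (fun a ha b hb => hconnS a ha b hb) ?_ ?_
  · intro c hc w
    rw [hdesc c hc w]
    obtain ⟨hcs, hcr, _⟩ := hchild c hc
    constructor
    · intro hwC
      have hws := compIn_subset G hwC
      exact ⟨hws.1, hws.2, hwC.2⟩
    · rintro ⟨hws, hwr, hreach⟩
      exact ⟨⟨hws, hwr⟩, hreach⟩
  · intro c hc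
    obtain ⟨hcs, hcr, hcroot⟩ := hchild c hc
    have heq : (glueTree s r F).subtreeAt c = F c := by
      refine RTree.ext'_s3 _ _ ?_ hcroot ?_
      · show (glueTree s r F).descendants c = (F c).supp
        rw [hsuppF c hcs hcr]; ext w; exact hdesc c hc w
      · funext w
        show (if w = c then none
            else if w ∈ (glueTree s r F).descendants c then (glueTree s r F).parent w else none)
            = (F c).parent w
        by_cases hwc : w = c
        · subst hwc
          rw [if_pos rfl]
          have h0 := (hwfF w hcs hcr).2.1
          rw [← hcroot] at h0
          exact h0.symm
        · by_cases hwd : w ∈ (glueTree s r F).descendants c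
          · rw [if_neg hwc, if_pos hwd]
            have hwC : w ∈ compIn G (s \ {r}) c := (hdesc c hc w).1 hwd
            have hws := compIn_subset G hwC
            have hFw : F w = F c := hFc c hcs hcr w hwC
            rw [glueTree_parent, if_pos (⟨hws.1, hws.2⟩ : w ∈ s ∧ w ≠ r), hFw,
              if_neg (by rw [← hcroot]; exact hwc)]
          · rw [if_neg hwc, if_neg hwd]
            have hwn : w ∉ (F c).supp := by
              rw [hsuppF c hcs hcr]; intro hw; exact hwd ((hdesc c hc w).2 hw)
            exact ((hwfF c hcs hcr).2.2.1 w hwn).symm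
    rw [heq]
    exact (hF c hcs hcr).2

end Glue


section Exists

variable {V : Type u} [Fintype V] [Nonempty V] (G : SimpleGraph V)

noncomputable def someTreeOn (C : Set V) : RTree V :=
  if h : ∃ T, IsSearchTreeOn G C T then h.choose
  else ⟨∅, Classical.arbitrary V, fun _ => none⟩

lemma someTreeOn_spec {C : Set V} (h : ∃ T, IsSearchTreeOn G C T) :
    IsSearchTreeOn G C (someTreeOn G C) := by
  rw [someTreeOn, dif_pos h]; exact h.choose_spec

lemma card_lt_of_subset_diff {C s : Set V} {r : V} (hC : C ⊆ s \ {r}) (hr : r ∈ s) :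
    C.toFinset.card < s.toFinset.card := by
  have hsub : C.toFinset ⊆ s.toFinset.erase r := by
    intro x hx
    rw [Set.mem_toFinset] at hx
    have hx' := hC hx
    exact Finset.mem_erase.mpr ⟨hx'.2, Set.mem_toFinset.mpr hx'.1⟩
  calc C.toFinset.card ≤ (s.toFinset.erase r).card := Finset.card_le_card hsub
    _ < s.toFinset.card := Finset.card_erase_lt_of_mem (Set.mem_toFinset.mpr hr)

lemma compIn_conn {s' : Set V} {w : V} :
    ∀ a ∈ compIn G s' w, ∀ b ∈ compIn G s' w, reachWithin G (compIn G s' w) a b := by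
  intro a ha b hb
  have hab : reachWithin G s' a b := (reachWithin_symm G ha.2).trans hb.2
  have h2 := reachWithin_compIn G (compIn_subset G ha) hab
  rwa [compIn_eq_of_mem G ha] at h2

lemma exists_searchTreeOn : ∀ (n : ℕ) (s : Set V), s.toFinset.card ≤ n →
    (∀ a ∈ s, ∀ b ∈ s, reachWithin G s a b) → s.Nonempty →
    ∃ T, IsSearchTreeOn G s T := by
  intro n
  induction n with
  | zero =>
    intro s hcard _ hne
    exact absurd (Finset.card_pos.mpr (Set.toFinset_nonempty.mpr hne)) (by omega)
  | succ n ih =>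
    intro s hcard hconn hne
    obtain ⟨r, hr⟩ := hne
    refine ⟨glueTree s r (fun w => someTreeOn G (compIn G (s \ {r}) w)), ?_⟩
    refine glue_isSearchTreeOn G ?_ ?_ hr hconn
    · intro w hw hwr
      apply someTreeOn_spec
      refine ih _ ?_ (compIn_conn G) ⟨w, mem_compIn_self G ⟨hw, hwr⟩⟩
      have := card_lt_of_subset_diff (compIn_subset G : compIn G (s \ {r}) w ⊆ s \ {r}) hr
      omega
    · intro w hw hwr w' hw'
      simp only [compIn_eq_of_mem G hw']

lemma exists_searchTreeOn_incomp : ∀ (n : ℕ) (s : Set V), s.toFinset.card ≤ n →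
    (∀ a ∈ s, ∀ b ∈ s, reachWithin G s a b) → ∀ u v, u ∈ s → v ∈ s →
    ¬ G.Adj u v → u ≠ v →
    ∃ T, IsSearchTreeOn G s T ∧ ¬ T.isAncestor u v ∧ ¬ T.isAncestor v u := by
  intro n
  induction n with
  | zero =>
    intro s hcard _ u v hu _ _ _
    exact absurd (Finset.card_pos.mpr (Set.toFinset_nonempty.mpr ⟨u, hu⟩)) (by omega)
  | succ n ih =>
    intro s hcard hconn u v hu hv hnadj hne
    obtain ⟨r, hrs, hadj_ur⟩ : ∃ z, z ∈ s ∧ G.Adj u z := by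
      rcases (hconn u hu v hv).cases_head with h | ⟨z, hz, _⟩
      · exact absurd h hne
      · exact ⟨z, hz.2.1, hz.2.2⟩
    have hur' : u ≠ r := hadj_ur.ne
    have hvr' : v ≠ r := fun h => hnadj (h ▸ hadj_ur)
    have hus : u ∈ s \ {r} := ⟨hu, hur'⟩
    have hvs : v ∈ s \ {r} := ⟨hv, hvr'⟩
    have hcard' : ∀ w, (compIn G (s \ {r}) w).toFinset.card ≤ n := by
      intro w
      have := card_lt_of_subset_diff
        (compIn_subset G : compIn G (s \ {r}) w ⊆ s \ {r}) hrs
      omega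
    by_cases hsame : v ∈ compIn G (s \ {r}) u
    · obtain ⟨Tuv, hTuv, hi1, hi2⟩ := ih (compIn G (s \ {r}) u) (hcard' u)
        (compIn_conn G) u v (mem_compIn_self G hus) hsame hnadj hne
      have hF : ∀ w, w ∈ s → w ≠ r → IsSearchTreeOn G (compIn G (s \ {r}) w)
          ((fun w => if u ∈ compIn G (s \ {r}) w then Tuv
            else someTreeOn G (compIn G (s \ {r}) w)) w) := by
        intro w hw hwr
        by_cases hu' : u ∈ compIn G (s \ {r}) w
        · simp only [if_pos hu']
          rw [← compIn_eq_of_mem G hu']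
          exact hTuv
        · simp only [if_neg hu']
          apply someTreeOn_spec
          refine exists_searchTreeOn G n _ (hcard' w) (compIn_conn G)
            ⟨w, mem_compIn_self G ⟨hw, hwr⟩⟩
      have hFc : ∀ w, w ∈ s → w ≠ r → ∀ w', w' ∈ compIn G (s \ {r}) w →
          (fun w => if u ∈ compIn G (s \ {r}) w then Tuv
            else someTreeOn G (compIn G (s \ {r}) w)) w' =
          (fun w => if u ∈ compIn G (s \ {r}) w then Tuv
            else someTreeOn G (compIn G (s \ {r}) w)) w := by
        intro w hw hwr w' hw'
        simp only [compIn_eq_of_mem G hw']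
      refine ⟨_, glue_isSearchTreeOn G hF hFc hrs hconn, ?_, ?_⟩
      · intro hA
        have h2 := (glue_chain G hF hFc hu hur' hA).2
        simp only [if_pos (mem_compIn_self G hus)] at h2
        exact hi1 h2
      · intro hA
        have h2 := (glue_chain G hF hFc hv hvr' hA).2
        have huv' : u ∈ compIn G (s \ {r}) v := by
          rw [compIn_eq_of_mem G hsame]; exact mem_compIn_self G hus
        simp only [if_pos huv'] at h2
        exact hi2 h2
    · have hF : ∀ w, w ∈ s → w ≠ r → IsSearchTreeOn G (compIn G (s \ {r}) w)
          ((fun w => someTreeOn G (compIn G (s \ {r}) w)) w) := by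
        intro w hw hwr
        apply someTreeOn_spec
        exact exists_searchTreeOn G n _ (hcard' w) (compIn_conn G)
          ⟨w, mem_compIn_self G ⟨hw, hwr⟩⟩
      have hFc : ∀ w, w ∈ s → w ≠ r → ∀ w', w' ∈ compIn G (s \ {r}) w →
          (fun w => someTreeOn G (compIn G (s \ {r}) w)) w' =
          (fun w => someTreeOn G (compIn G (s \ {r}) w)) w := by
        intro w hw hwr w' hw'
        simp only [compIn_eq_of_mem G hw']
      refine ⟨_, glue_isSearchTreeOn G hF hFc hrs hconn, ?_, ?_⟩
      · intro hA
        exact hsame (glue_chain G hF hFc hu hur' hA).1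
      · intro hA
        have hucv := (glue_chain G hF hFc hv hvr' hA).1
        refine hsame ?_
        rw [compIn_eq_of_mem G hucv]
        exact mem_compIn_self G hvs

lemma comparable_of_adj {T : RTree V} (h : IsSearchTreeRec G T) :
    ∀ u v, G.Adj u v → u ∈ T.supp → v ∈ T.supp →
    T.isAncestor u v ∨ T.isAncestor v u := by
  induction h with
  | intro T hwf hconn hcomp hrec IH =>
    intro u v hadj hu hv
    by_cases hur : u = T.root
    · exact Or.inl (hur ▸ hwf.2.2.2.2 v hv)
    by_cases hvr : v = T.root
    · exact Or.inr (hvr ▸ hwf.2.2.2.2 u hu)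
    rcases (hwf.2.2.2.2 u hu).cases_tail with h0 | ⟨c, hc1, hc2⟩
    · exact absurd h0.symm hur
    have hcu : u ∈ T.descendants c := ⟨hu, hc1⟩
    have hreach_u := ((hcomp c hc2 u).1 hcu).2.2
    have hvd : v ∈ T.descendants c := (hcomp c hc2 v).2
      ⟨hv, hvr, hreach_u.tail ⟨⟨hu, hur⟩, ⟨hv, hvr⟩, hadj⟩⟩
    have lift : ∀ a b, Relation.ReflTransGen (T.subtreeAt c).parentRel a b →
        Relation.ReflTransGen T.parentRel a b := by
      intro a b hab
      refine Relation.ReflTransGen.mono ?_ _ _ hab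
      intro x y hxy
      have hxy' : (if x = c then none
          else if x ∈ T.descendants c then T.parent x else none) = some y := hxy
      split_ifs at hxy' with h1 h2
      · exact hxy'
    rcases IH c hc2 u v hadj hcu hvd with h' | h'
    · exact Or.inl (lift _ _ h')
    · exact Or.inr (lift _ _ h')

end Exists


/-- `u` and `v` are adjacent in `G` iff in every search tree on `G`
they lie on a common branch (one is an ancestor of the other). -/
theorem adj_iff_comparable_in_all_searchTrees {V : Type u} [Fintype V] [Nonempty V]
    (G : SimpleGraph V) (hG : G.Connected) (u v : V) (hne : u ≠ v) :
    G.Adj u v ↔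
      ∀ T : RTree V, IsSearchTree G T → (T.isAncestor u v ∨ T.isAncestor v u) := by
  constructor
  · intro hadj T hT
    exact comparable_of_adj G hT.2 u v hadj (by rw [hT.1]; trivial) (by rw [hT.1]; trivial)
  · intro h
    by_contra hadj
    have hconnU : ∀ a ∈ (Set.univ : Set V), ∀ b ∈ (Set.univ : Set V),
        reachWithin G Set.univ a b := by
      intro a _ b _
      have h2 := (G.reachable_iff_reflTransGen a b).mp (hG.preconnected a b)
      exact Relation.ReflTransGen.mono (fun x y hxy => ⟨trivial, trivial, hxy⟩) _ _ h2
    obtain ⟨T, hT, h1, h2⟩ := exists_searchTreeOn_incomp G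
      (Fintype.card V) Set.univ (Finset.card_le_univ _) hconnU u v trivial trivial hadj hne
    rcases h T hT with h' | h'
    exacts [h1 h', h2 h']
end

section
/- Let G be a connected graph. A vertex w of G has at most one child in every search tree on G if and only if w is a simplicial vertex of G (i.e., the open neighborhood of w induces a clique in G). -/
open scoped Classical

universe u

variable {V : Type u}

namespace STAux

open Relation Set

variable {V : Type u}

lemma reach_symm {G : SimpleGraph V} {s : Set V} {a b : V}
    (h : reachWithin G s a b) : reachWithin G s b a := by
  induction h with
  | refl => exact .refl
  | tail _ h2 ih => exact (ReflTransGen.single ⟨h2.2.1, h2.1, h2.2.2.symm⟩).trans ih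

lemma reach_mono {G : SimpleGraph V} {s t : Set V} (hst : s ⊆ t) {a b : V}
    (h : reachWithin G s a b) : reachWithin G t a b :=
  Relation.ReflTransGen.mono (r := fun a b => a ∈ s ∧ b ∈ s ∧ G.Adj a b)
    (p := fun a b => a ∈ t ∧ b ∈ t ∧ G.Adj a b)
    (fun _ _ hxy => ⟨hst hxy.1, hst hxy.2.1, hxy.2.2⟩) _ _ h

/-- The connected component of `c` within `t`. -/
def comp (G : SimpleGraph V) (t : Set V) (c : V) : Set V :=
  {v | v ∈ t ∧ reachWithin G t c v}

lemma mem_comp_self {G : SimpleGraph V} {t : Set V} {c : V} (hc : c ∈ t) :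
    c ∈ comp G t c := ⟨hc, .refl⟩

lemma comp_subset {G : SimpleGraph V} {t : Set V} {c : V} : comp G t c ⊆ t :=
  fun _ h => h.1

lemma comp_eq_of_mem {G : SimpleGraph V} {t : Set V} {c u : V} (hu : u ∈ comp G t c) :
    comp G t u = comp G t c := by
  ext z
  exact ⟨fun hz => ⟨hz.1, hu.2.trans hz.2⟩, fun hz => ⟨hz.1, (reach_symm hu.2).trans hz.2⟩⟩

lemma reach_in_comp {G : SimpleGraph V} {t : Set V} {a : V} :
    ∀ {x y : V}, reachWithin G t x y → x ∈ comp G t a → reachWithin G (comp G t a) x y := by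
  intro x y h
  induction h using ReflTransGen.head_induction_on with
  | refl => exact fun _ => .refl
  | head h' _ ih =>
      intro hx
      have hc : _ ∈ comp G t a := ⟨h'.2.1, hx.2.trans (ReflTransGen.single h')⟩
      exact ReflTransGen.head ⟨hx, hc, h'.2.2⟩ (ih hc)

lemma comp_conn {G : SimpleGraph V} {t : Set V} {c : V} :
    ∀ x ∈ comp G t c, ∀ y ∈ comp G t c, reachWithin G (comp G t c) x y := by
  intro x hx y hy
  exact reach_in_comp ((reach_symm hx.2).trans hy.2) hx

lemma wf_parent_mem {T : RTree V} (h : T.WF) {x y : V} (hxy : T.parent x = some y) :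
    x ∈ T.supp ∧ y ∈ T.supp ∧ x ≠ T.root := by
  have hx : x ∈ T.supp := by
    by_contra hx
    rw [h.2.2.1 x hx] at hxy; exact nomatch hxy
  have hxr : x ≠ T.root := by
    rintro rfl; rw [h.2.1] at hxy; exact nomatch hxy
  obtain ⟨u, hu, hpu⟩ := h.2.2.2.1 x hx hxr
  rw [hpu] at hxy
  exact ⟨hx, (Option.some.inj hxy) ▸ hu, hxr⟩

lemma rec_wf {G : SimpleGraph V} {T : RTree V} (h : IsSearchTreeRec G T) : T.WF := by
  cases h with | intro T hwf _ _ _ => exact hwf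

lemma rtree_ext {T₁ T₂ : RTree V} (h1 : T₁.supp = T₂.supp) (h2 : T₁.root = T₂.root)
    (h3 : ∀ v, T₁.parent v = T₂.parent v) : T₁ = T₂ := by
  cases T₁; cases T₂
  simp only [RTree.mk.injEq]
  exact ⟨h1, h2, funext h3⟩

def singleT (x : V) : RTree V := ⟨{x}, x, fun _ => none⟩

lemma singleT_isOn (G : SimpleGraph V) (x : V) : IsSearchTreeOn G {x} (singleT x) := by
  refine ⟨rfl, .intro _ ⟨rfl, rfl, fun _ _ => rfl, ?_, ?_⟩ ?_ ?_ ?_⟩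
  · intro v hv hne; exact absurd hv hne
  · intro v hv
    rw [show v = x from hv]
    exact .refl
  · intro p hp q hq
    rw [show p = x from hp, show q = x from hq]
    exact .refl
  · intro c hc
    exact absurd hc (by simp [singleT])
  · intro c hc
    exact absurd hc (by simp [singleT])

noncomputable def pickT (G : SimpleGraph V) (d : V) (P : Set V) : RTree V :=
  if h : ∃ T, IsSearchTreeOn G P T then h.choose else singleT d

lemma pickT_spec {G : SimpleGraph V} {d : V} {P : Set V}
    (h : ∃ T, IsSearchTreeOn G P T) : IsSearchTreeOn G P (pickT G d P) := by
  rw [pickT, dif_pos h]; exact h.choose_spec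

noncomputable def glueTree (s : Set V) (r : V) (𝒯 : V → RTree V) : RTree V where
  supp := s
  root := r
  parent := fun v =>
    if v ∈ s \ {r} then (if v = (𝒯 v).root then some r else (𝒯 v).parent v) else none

lemma glueTree_parent (s : Set V) (r : V) (𝒯 : V → RTree V) (v : V) :
    (glueTree s r 𝒯).parent v =
      if v ∈ s \ {r} then (if v = (𝒯 v).root then some r else (𝒯 v).parent v) else none := rfl

lemma glue {G : SimpleGraph V} {s : Set V} {r : V} (hr : r ∈ s)
    (hconn : ∀ x ∈ s, ∀ y ∈ s, reachWithin G s x y)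
    (𝒯 : V → RTree V)
    (hT : ∀ v ∈ s \ {r}, IsSearchTreeOn G (comp G (s \ {r}) v) (𝒯 v))
    (hconst : ∀ u ∈ s \ {r}, ∀ v ∈ comp G (s \ {r}) u, 𝒯 v = 𝒯 u) :
    IsSearchTreeOn G s (glueTree s r 𝒯) := by
  have hr' : r ∉ s \ {r} := fun h => h.2 rfl
  have hsupp : ∀ v ∈ s \ {r}, (𝒯 v).supp = comp G (s \ {r}) v := fun v hv => (hT v hv).1
  have hwfv : ∀ v ∈ s \ {r}, (𝒯 v).WF := fun v hv => rec_wf (hT v hv).2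
  have hp_root : ∀ v ∈ s \ {r}, v = (𝒯 v).root → (glueTree s r 𝒯).parent v = some r := by
    intro v hv hvr
    rw [glueTree_parent, if_pos hv, if_pos hvr]
  have hp_nroot : ∀ v ∈ s \ {r}, v ≠ (𝒯 v).root →
      (glueTree s r 𝒯).parent v = (𝒯 v).parent v := by
    intro v hv hvr
    rw [glueTree_parent, if_pos hv, if_neg hvr]
  have hp_out : ∀ v, v ∉ s \ {r} → (glueTree s r 𝒯).parent v = none := by
    intro v hv
    rw [glueTree_parent, if_neg hv]
  -- going up the glued tree from inside a component
  have chainUp : ∀ v ∈ s \ {r}, ∀ x ∈ comp G (s \ {r}) v,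
      Relation.ReflTransGen (glueTree s r 𝒯).parentRel x (𝒯 v).root := by
    intro v hv x hx
    have h5 : Relation.ReflTransGen (𝒯 v).parentRel x (𝒯 v).root :=
      (hwfv v hv).2.2.2.2 x (by rw [hsupp v hv]; exact hx)
    clear hx
    induction h5 using ReflTransGen.head_induction_on with
    | refl => exact .refl
    | head h' hrest ih =>
        rename_i z m
        obtain ⟨hz, hm, hzr⟩ := wf_parent_mem (hwfv v hv) h'
        rw [hsupp v hv] at hz
        have hTz : 𝒯 z = 𝒯 v := hconst v hv z hz
        have hz' : z ∈ s \ {r} := comp_subset hz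
        refine ReflTransGen.head ?_ ih
        show (glueTree s r 𝒯).parent z = some m
        rw [hp_nroot z hz' (by rw [hTz]; exact hzr), hTz]
        exact h'
  -- going down: anything below `c` is in the component of `c`
  have descend : ∀ c ∈ s \ {r}, ∀ z, Relation.ReflTransGen (glueTree s r 𝒯).parentRel z c →
      z ∈ comp G (s \ {r}) c := by
    intro c hc z hz
    induction hz using ReflTransGen.head_induction_on with
    | refl => exact mem_comp_self hc
    | head h' hrest ih =>
        rename_i x m
        have hpx : (glueTree s r 𝒯).parent x = some m := h'
        have hx' : x ∈ s \ {r} := by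
          by_contra hxn
          rw [hp_out x hxn] at hpx; exact nomatch hpx
        by_cases hxr : x = (𝒯 x).root
        · exfalso
          have hmr : m = r := by
            have := hp_root x hx' hxr
            rw [this] at hpx; exact (Option.some.inj hpx).symm
          rw [hmr] at hrest
          rcases hrest.cases_head with h1 | ⟨n, hn, -⟩
          · exact hc.2 (h1 ▸ rfl)
          · have hthis : (glueTree s r 𝒯).parent r = some n := hn
            rw [hp_out r hr'] at hthis; exact nomatch hthis
        · have h'' : (𝒯 x).parent x = some m := by
            rw [← hp_nroot x hx' hxr]; exact hpx
          obtain ⟨-, hm, -⟩ := wf_parent_mem (hwfv x hx') h''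
          rw [hsupp x hx'] at hm
          have hxm : x ∈ comp G (s \ {r}) m := by
            rw [comp_eq_of_mem hm]; exact mem_comp_self hx'
          rw [comp_eq_of_mem ih] at hxm
          exact hxm
  have hchild : ∀ c, (glueTree s r 𝒯).parent c = some r → c ∈ s \ {r} ∧ c = (𝒯 c).root := by
    intro c hc
    have hc' : c ∈ s \ {r} := by
      by_contra h
      rw [hp_out c h] at hc; exact nomatch hc
    refine ⟨hc', ?_⟩
    by_contra hcr
    rw [hp_nroot c hc' hcr] at hc
    obtain ⟨-, hu, -⟩ := wf_parent_mem (hwfv c hc') hc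
    rw [hsupp c hc'] at hu
    exact hr' (comp_subset hu)
  have hdesc : ∀ c ∈ s \ {r}, c = (𝒯 c).root →
      (glueTree s r 𝒯).descendants c = comp G (s \ {r}) c := by
    intro c hc hcr
    ext z
    constructor
    · exact fun hz => descend c hc z hz.2
    · intro hz
      refine ⟨(comp_subset hz).1, ?_⟩
      have h1 := chainUp c hc z hz
      rw [← hcr] at h1
      exact h1
  have hsub : ∀ c, (glueTree s r 𝒯).parent c = some r →
      (glueTree s r 𝒯).subtreeAt c = 𝒯 c := by
    intro c hc
    obtain ⟨hc', hcr⟩ := hchild c hc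
    have hd := hdesc c hc' hcr
    apply rtree_ext
    · show (glueTree s r 𝒯).descendants c = (𝒯 c).supp
      rw [hd, hsupp c hc']
    · exact hcr
    · intro x
      show (if x = c then none
          else if x ∈ (glueTree s r 𝒯).descendants c then (glueTree s r 𝒯).parent x else none)
          = (𝒯 c).parent x
      by_cases hxc : x = c
      · subst hxc
        rw [if_pos rfl]
        have h2 := (hwfv x hc').2.1
        rw [← hcr] at h2
        exact h2.symm
      · rw [if_neg hxc]
        by_cases hxd : x ∈ (glueTree s r 𝒯).descendants c
        · rw [if_pos hxd]
          have hx : x ∈ comp G (s \ {r}) c := by rw [← hd]; exact hxd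
          have hx' : x ∈ s \ {r} := comp_subset hx
          have hTx : 𝒯 x = 𝒯 c := hconst c hc' x hx
          have hxr : x ≠ (𝒯 x).root := by rw [hTx, ← hcr]; exact hxc
          rw [hp_nroot x hx' hxr, hTx]
        · rw [if_neg hxd]
          have hxs : x ∉ (𝒯 c).supp := by
            rw [hsupp c hc', ← hd]; exact hxd
          exact ((hwfv c hc').2.2.1 x hxs).symm
  refine ⟨rfl, .intro _ ⟨hr, hp_out r hr', ?_, ?_, ?_⟩ hconn ?_ ?_⟩
  · intro v hv
    exact hp_out v (fun h => hv h.1)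
  · intro v hv hvr
    have hv' : v ∈ s \ {r} := ⟨hv, fun h => hvr h⟩
    by_cases hvt : v = (𝒯 v).root
    · exact ⟨r, hr, hp_root v hv' hvt⟩
    · obtain ⟨u, hu, hpu⟩ := (hwfv v hv').2.2.2.1 v
        (by rw [hsupp v hv']; exact mem_comp_self hv') hvt
      refine ⟨u, ?_, ?_⟩
      · rw [hsupp v hv'] at hu
        exact (comp_subset hu).1
      · rw [hp_nroot v hv' hvt]; exact hpu
  · intro v hv
    by_cases hvr : v = r
    · subst hvr; exact .refl
    · have hv' : v ∈ s \ {r} := ⟨hv, fun h => hvr h⟩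
      have h1 := chainUp v hv' v (mem_comp_self hv')
      refine h1.tail ?_
      have hroot_mem : (𝒯 v).root ∈ comp G (s \ {r}) v := by
        rw [← hsupp v hv']; exact (hwfv v hv').1
      have hroot' : (𝒯 v).root ∈ s \ {r} := comp_subset hroot_mem
      have hTroot : 𝒯 ((𝒯 v).root) = 𝒯 v := hconst v hv' _ hroot_mem
      show (glueTree s r 𝒯).parent ((𝒯 v).root) = some r
      exact hp_root _ hroot' (by rw [hTroot])
  · intro c hc z
    obtain ⟨hc', hcr⟩ := hchild c hc
    constructor
    · intro hz
      have hz' : z ∈ comp G (s \ {r}) c := by rw [← hdesc c hc' hcr]; exact hz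
      have hz2 : z ∈ s \ {r} := comp_subset hz'
      exact ⟨hz2.1, fun h => hz2.2 h, hz'.2⟩
    · rintro ⟨hz1, hz2, hz3⟩
      rw [hdesc c hc' hcr]
      exact ⟨⟨hz1, fun h => hz2 h⟩, hz3⟩
  · intro c hc
    rw [hsub c hc]
    exact (hT c (hchild c hc).1).2

lemma reach_pair {G : SimpleGraph V} {x y z : V} (hxy : ¬ G.Adj x y)
    (h : reachWithin G {x, y} x z) : z = x := by
  rcases h.cases_head with h1 | ⟨c, hc, -⟩
  · exact h1.symm
  · obtain ⟨-, hc2, hadj⟩ := hc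
    rcases hc2 with rfl | hc2
    · exact absurd hadj (G.irrefl)
    · rw [Set.mem_singleton_iff] at hc2
      subst hc2
      exact absurd hadj hxy

lemma exists_tree (G : SimpleGraph V) [Fintype V] (d : V) :
    ∀ n (s : Set V), s.ncard ≤ n → s.Nonempty →
      (∀ x ∈ s, ∀ y ∈ s, reachWithin G s x y) → ∃ T, IsSearchTreeOn G s T := by
  intro n
  induction n with
  | zero =>
      intro s hc hne _
      have := (Set.ncard_pos (s.toFinite)).2 hne
      omega
  | succ n ih =>
      intro s hc hne hconn
      obtain ⟨r, hr⟩ := hne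
      refine ⟨glueTree s r (fun v => pickT G d (comp G (s \ {r}) v)), glue hr hconn _ ?_ ?_⟩
      · intro v hv
        apply pickT_spec
        apply ih
        · have h2 : (s \ {r}).ncard < s.ncard := Set.ncard_diff_singleton_lt_of_mem hr
          have h3 : (comp G (s \ {r}) v).ncard ≤ (s \ {r}).ncard :=
            Set.ncard_le_ncard comp_subset ((s \ {r}).toFinite)
          omega
        · exact ⟨v, mem_comp_self hv⟩
        · exact comp_conn
      · intro u hu v hv
        rw [comp_eq_of_mem hv]

lemma exists_two (G : SimpleGraph V) [Fintype V] {w a b : V}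
    (hwa : G.Adj w a) (hwb : G.Adj w b) (hab : a ≠ b) (hnadj : ¬ G.Adj a b) :
    ∀ n (s : Set V), s.ncard ≤ n → w ∈ s → a ∈ s → b ∈ s →
      (∀ x ∈ s, ∀ y ∈ s, reachWithin G s x y) →
      ∃ T, IsSearchTreeOn G s T ∧ T.parent a = some w ∧ T.parent b = some w := by
  intro n
  induction n with
  | zero =>
      intro s hc hw _ _ _
      have := (Set.ncard_pos (s.toFinite)).2 ⟨w, hw⟩
      omega
  | succ n ih =>
      intro s hc hw ha hb hconn
      by_cases hex : ∃ r ∈ s, r ≠ w ∧ r ≠ a ∧ r ≠ b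
      · obtain ⟨r, hr, hrw, hra, hrb⟩ := hex
        have hw' : w ∈ s \ {r} := ⟨hw, fun h => hrw ((Set.mem_singleton_iff.1 h).symm)⟩
        have ha' : a ∈ s \ {r} := ⟨ha, fun h => hra ((Set.mem_singleton_iff.1 h).symm)⟩
        have hb' : b ∈ s \ {r} := ⟨hb, fun h => hrb ((Set.mem_singleton_iff.1 h).symm)⟩
        have haw : a ∈ comp G (s \ {r}) w := ⟨ha', ReflTransGen.single ⟨hw', ha', hwa⟩⟩
        have hbw : b ∈ comp G (s \ {r}) w := ⟨hb', ReflTransGen.single ⟨hw', hb', hwb⟩⟩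
        have hcard' : ∀ v ∈ s \ {r}, (comp G (s \ {r}) v).ncard ≤ n := by
          intro v hv
          have h2 : (s \ {r}).ncard < s.ncard := Set.ncard_diff_singleton_lt_of_mem hr
          have h3 : (comp G (s \ {r}) v).ncard ≤ (s \ {r}).ncard :=
            Set.ncard_le_ncard comp_subset ((s \ {r}).toFinite)
          omega
        have hstrong : ∃ T, IsSearchTreeOn G (comp G (s \ {r}) w) T ∧
            T.parent a = some w ∧ T.parent b = some w :=
          ih (comp G (s \ {r}) w) (hcard' w hw') (mem_comp_self hw') haw hbw comp_conn
        classical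
        set F : Set V → RTree V := fun P =>
          if h : ∃ T, IsSearchTreeOn G P T ∧ T.parent a = some w ∧ T.parent b = some w
          then h.choose else pickT G w P with hF
        have hFw : IsSearchTreeOn G (comp G (s \ {r}) w) (F (comp G (s \ {r}) w)) ∧
            (F (comp G (s \ {r}) w)).parent a = some w ∧
            (F (comp G (s \ {r}) w)).parent b = some w := by
          rw [hF]
          simp only [dif_pos hstrong]
          exact hstrong.choose_spec
        have hpar : ∀ x, x ∈ s \ {r} → x ∈ comp G (s \ {r}) w →
            (F (comp G (s \ {r}) w)).parent x = some w →
            (glueTree s r (fun v => F (comp G (s \ {r}) v))).parent x = some w := by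
          intro x hx hxc hpx
          have hcomp_eq : comp G (s \ {r}) x = comp G (s \ {r}) w := comp_eq_of_mem hxc
          have hwf := rec_wf hFw.1.2
          have hxnr : x ≠ (F (comp G (s \ {r}) w)).root := by
            intro h
            rw [h, hwf.2.1] at hpx
            exact nomatch hpx
          rw [glueTree_parent, if_pos hx]
          show (if x = (F (comp G (s \ {r}) x)).root then some r
              else (F (comp G (s \ {r}) x)).parent x) = some w
          rw [hcomp_eq, if_neg hxnr]
          exact hpx
        refine ⟨glueTree s r (fun v => F (comp G (s \ {r}) v)), glue hr hconn _ ?_ ?_, ?_, ?_⟩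
        · intro v hv
          show IsSearchTreeOn G (comp G (s \ {r}) v) (F (comp G (s \ {r}) v))
          by_cases h : ∃ T, IsSearchTreeOn G (comp G (s \ {r}) v) T ∧
              T.parent a = some w ∧ T.parent b = some w
          · rw [hF]; simp only [dif_pos h]; exact h.choose_spec.1
          · rw [hF]; simp only [dif_neg h]
            exact pickT_spec (exists_tree G w n (comp G (s \ {r}) v) (hcard' v hv)
              ⟨v, mem_comp_self hv⟩ comp_conn)
        · intro u hu v hv
          show F (comp G (s \ {r}) v) = F (comp G (s \ {r}) u)
          rw [comp_eq_of_mem hv]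
        · exact hpar a ha' haw hFw.2.1
        · exact hpar b hb' hbw hFw.2.2
      · -- s = {w, a, b}
        push_neg at hex
        have hs'sub : s \ {w} ⊆ {a, b} := by
          intro x hx
          have hxw : x ≠ w := fun h => hx.2 (h ▸ rfl)
          by_cases hxa : x = a
          · exact Or.inl hxa
          · exact Or.inr (hex x hx.1 hxw hxa)
        have ha' : a ∈ s \ {w} := ⟨ha, fun h => hwa.ne' (Set.mem_singleton_iff.1 h)⟩
        have hb' : b ∈ s \ {w} := ⟨hb, fun h => hwb.ne' (Set.mem_singleton_iff.1 h)⟩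
        have hcompa : comp G (s \ {w}) a = {a} := by
          apply Set.Subset.antisymm
          · intro z hz
            exact reach_pair hnadj (reach_mono hs'sub hz.2)
          · intro z hz
            rw [Set.mem_singleton_iff] at hz
            subst hz
            exact mem_comp_self ha'
        have hcompb : comp G (s \ {w}) b = {b} := by
          apply Set.Subset.antisymm
          · intro z hz
            refine reach_pair (fun h => hnadj h.symm) (reach_mono ?_ hz.2)
            rw [Set.pair_comm b a]
            exact hs'sub
          · intro z hz
            rw [Set.mem_singleton_iff] at hz
            subst hz
            exact mem_comp_self hb'
        have hcompv : ∀ v ∈ s \ {w}, comp G (s \ {w}) v = {v} := by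
          intro v hv
          rcases hs'sub hv with rfl | h1
          · exact hcompa
          · rw [Set.mem_singleton_iff] at h1
            subst h1
            exact hcompb
        refine ⟨glueTree s w (fun v => singleT v), glue hw hconn _ ?_ ?_, ?_, ?_⟩
        · intro v hv
          rw [hcompv v hv]
          exact singleT_isOn G v
        · intro u hu v hv
          rw [hcompv u hu, Set.mem_singleton_iff] at hv
          rw [hv]
        · rw [glueTree_parent, if_pos ha']
          exact if_pos rfl
        · rw [glueTree_parent, if_pos hb']
          exact if_pos rfl

lemma reach_avoid {G : SimpleGraph V} {w : V}
    (hsimp : ∀ a b, G.Adj w a → G.Adj w b → a ≠ b → G.Adj a b)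
    {s : Set V} {y : V} (hy : y ≠ w) :
    ∀ {x : V}, reachWithin G s x y →
      (x ≠ w → reachWithin G (s \ {w}) x y) ∧
      (x = w → ∃ q, q ∈ s ∧ q ≠ w ∧ G.Adj w q ∧ reachWithin G (s \ {w}) q y) := by
  intro x h
  induction h using ReflTransGen.head_induction_on with
  | refl => exact ⟨fun _ => .refl, fun hxw => absurd hxw hy⟩
  | head h' hrest ih =>
      rename_i p c
      obtain ⟨hp_s, hc_s, hadj⟩ := h'
      constructor
      · intro hpw
        by_cases hcw : c = w
        · obtain ⟨q, hq_s, hq_w, hq_adj, hq_reach⟩ := ih.2 hcw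
          by_cases hqp : q = p
          · rw [← hqp]; exact hq_reach
          · have hpq : G.Adj p q := hsimp p q (hcw ▸ hadj).symm hq_adj (fun h => hqp h.symm)
            exact ReflTransGen.head ⟨⟨hp_s, fun h => hpw h⟩, ⟨hq_s, fun h => hq_w h⟩, hpq⟩ hq_reach
        · exact ReflTransGen.head ⟨⟨hp_s, fun h => hpw h⟩, ⟨hc_s, fun h => hcw h⟩, hadj⟩ (ih.1 hcw)
      · intro hpw
        have hcw : c ≠ w := by
          intro h
          rw [hpw, h] at hadj
          exact G.irrefl hadj
        exact ⟨c, hc_s, hcw, hpw ▸ hadj, ih.1 hcw⟩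

lemma atMostOne {G : SimpleGraph V} {w : V}
    (hsimp : ∀ a b, G.Adj w a → G.Adj w b → a ≠ b → G.Adj a b) :
    ∀ {T : RTree V}, IsSearchTreeRec G T →
      ∀ a b, T.parent a = some w → T.parent b = some w → a = b := by
  intro T h
  induction h with
  | intro T hwf hconn hcomp hrec ih =>
    intro a b hpa hpb
    obtain ⟨haS, hwS, har⟩ := wf_parent_mem hwf hpa
    obtain ⟨hbS, -, hbr⟩ := wf_parent_mem hwf hpb
    by_cases hwr : w = T.root
    · by_contra hab
      have haw : a ≠ w := fun h => har (h.trans hwr)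
      have hbw : b ≠ w := fun h => hbr (h.trans hwr)
      have hreach : reachWithin G (T.supp \ {w}) a b :=
        (reach_avoid hsimp hbw (hconn a haS b hbS)).1 haw
      have hpa' : T.parent a = some T.root := by rw [← hwr]; exact hpa
      have hb_in : b ∈ T.descendants a := by
        rw [hcomp a hpa' b]
        refine ⟨hbS, hbr, ?_⟩
        rw [← hwr]
        exact hreach
      rcases hb_in.2.cases_head with h1 | ⟨c, hc1, hc2⟩
      · exact hab h1.symm
      · have hcw : c = w := Option.some.inj ((hc1 : T.parent b = some c).symm.trans hpb)
        subst hcw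
        rcases hc2.cases_head with h2 | ⟨d, hd1, -⟩
        · exact haw h2.symm
        · have hnone : T.parent c = none := by rw [hwr]; exact hwf.2.1
          have : T.parent c = some d := hd1
          rw [hnone] at this
          exact nomatch this
    · have hchain : Relation.ReflTransGen T.parentRel w T.root := hwf.2.2.2.2 w hwS
      rcases hchain.cases_tail with heq | ⟨c, hwc, hcr⟩
      · exact absurd heq.symm hwr
      · have hanc_a : T.isAncestor c a := ReflTransGen.head (hpa : T.parentRel a w) hwc
        have hanc_b : T.isAncestor c b := ReflTransGen.head (hpb : T.parentRel b w) hwc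
        have hac : a ≠ c := by
          intro h
          exact hwr (Option.some.inj ((h ▸ hpa).symm.trans hcr))
        have hbc : b ≠ c := by
          intro h
          exact hwr (Option.some.inj ((h ▸ hpb).symm.trans hcr))
        have hkey_a : (T.subtreeAt c).parent a = some w := by
          show (if a = c then none
              else if a ∈ T.descendants c then T.parent a else none) = some w
          rw [if_neg hac, if_pos (show a ∈ T.descendants c from ⟨haS, hanc_a⟩)]
          exact hpa
        have hkey_b : (T.subtreeAt c).parent b = some w := by
          show (if b = c then none
              else if b ∈ T.descendants c then T.parent b else none) = some w
          rw [if_neg hbc, if_pos (show b ∈ T.descendants c from ⟨hbS, hanc_b⟩)]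
          exact hpb
        exact ih c hcr a b hkey_a hkey_b

end STAux


/-- `w` has at most one child in every search tree on `G` iff `w` is
simplicial in `G`. -/
theorem atMostOneChild_iff_simplicial {V : Type u} [Fintype V] [Nonempty V]
    (G : SimpleGraph V) (hG : G.Connected) (w : V) :
    (∀ T : RTree V, IsSearchTree G T →
      ∀ a b, T.parent a = some w → T.parent b = some w → a = b)
    ↔ (∀ a b, G.Adj w a → G.Adj w b → a ≠ b → G.Adj a b) := by
  constructor
  · intro H a b hwa hwb hab
    by_contra hnadj
    have hconn : ∀ x ∈ (Set.univ : Set V), ∀ y ∈ (Set.univ : Set V),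
        reachWithin G Set.univ x y := by
      intro x _ y _
      have h1 := (SimpleGraph.reachable_iff_reflTransGen x y).1 (hG.preconnected x y)
      exact Relation.ReflTransGen.mono (r := G.Adj)
        (p := fun a b => a ∈ (Set.univ : Set V) ∧ b ∈ (Set.univ : Set V) ∧ G.Adj a b)
        (fun p q h => ⟨trivial, trivial, h⟩) _ _ h1
    obtain ⟨T, hT, hpa, hpb⟩ := STAux.exists_two G hwa hwb hab hnadj
      (Set.univ : Set V).ncard Set.univ le_rfl (Set.mem_univ w) (Set.mem_univ a)
      (Set.mem_univ b) hconn
    exact hab (H T hT a b hpa hpb)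
  · intro hsimp T hT a b hpa hpb
    exact STAux.atMostOne hsimp hT.2 a b hpa hpb
end
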